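/- Assume Q has full column rank s, and let Φ : ℝ^{s×s} → ℝ be Loewner-isotone on positive semidefinite matrices (A ⪯ B implies Φ(A) ≤ Φ(B)). Suppose ξ* is a Φ-optimal design in the model with nuisance effects: ξ* is feasible and Φ((Kᵀ G* K)⁻¹) ≥ Φ((Kᵀ G K)⁻¹) for every feasible design ξ, every generalized inverse G* of M(ξ*) and every generalized inverse G of M(ξ). Then the treatment proportions design w* = w_{ξ*} satisfies w*_u > 0 for all u and is Φ-optimal in the marginal model without nuisance effects: Φ(N_Q(w*)) ≥ Φ(N_Q(w)) for every w ∈ ℝ^v with all w_u > 0 and Σ_u w_u = 1. -/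

import Mathlib

open Matrix Finset

noncomputable section

-- === aux general lemmas ===
section Aux
variable {m s : Type*} [Fintype m] [Fintype s] [DecidableEq m] [DecidableEq s]

lemma ginv_of_decomp (U : Matrix m m ℝ) (hUU : star U * U = 1) (ev : m → ℝ)
    (M : Matrix m m ℝ) (hspec : M = U * diagonal ev * star U) :
    ∃ G, M * G * M = M := by
  subst hspec
  refine ⟨U * diagonal (fun i => (ev i)⁻¹) * star U, ?_⟩
  have key : ∀ A B C : Matrix m m ℝ, (U * A * star U) * (U * B * star U) * (U * C * star U)
      = U * (A * B * C) * star U := by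
    intro A B C
    simp only [← Matrix.mul_assoc]
    rw [Matrix.mul_assoc (U*A) (star U) U, hUU, Matrix.mul_one,
        Matrix.mul_assoc (U*A*B) (star U) U, hUU, Matrix.mul_one]
  rw [key]
  congr 2
  rw [diagonal_mul_diagonal, diagonal_mul_diagonal]
  congr 1
  funext i
  rcases eq_or_ne (ev i) 0 with h | h
  · simp [h]
  · field_simp

/-- Every real symmetric matrix has a generalized inverse. -/
lemma exists_ginv (M : Matrix m m ℝ) (hM : M.IsHermitian) : ∃ G, M * G * M = M := by
  have hUU : star (hM.eigenvectorUnitary : Matrix m m ℝ) * hM.eigenvectorUnitary = 1 :=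
    mem_unitaryGroup_iff'.mp hM.eigenvectorUnitary.2
  have hspec : M = (hM.eigenvectorUnitary : Matrix m m ℝ) * diagonal hM.eigenvalues *
      star (hM.eigenvectorUnitary : Matrix m m ℝ) := by
    have := hM.spectral_theorem
    simpa [RCLike.ofReal] using this
  exact ginv_of_decomp _ hUU _ M hspec

lemma sandwich (M : Matrix m m ℝ) (hM : M.PosSemidef) (R : Matrix m s ℝ) (L : Matrix s m ℝ)
    (hLMR : L * M * R = 1) :
    (Rᵀ * M * R).PosDef ∧ (L * M * Lᵀ - (Rᵀ * M * R)⁻¹).PosSemidef := by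
  have hMsymm : Mᵀ = M := by
    have := hM.1
    rwa [IsHermitian, conjTranspose_eq_transpose_of_trivial] at this
  set B := Rᵀ * M * R with hB
  have hBsymm : Bᵀ = B := by
    rw [hB, transpose_mul, transpose_mul, transpose_transpose, hMsymm, Matrix.mul_assoc]
  have hBpd : B.PosDef := by
    rw [posDef_iff_dotProduct_mulVec]
    constructor
    · rwa [IsHermitian, conjTranspose_eq_transpose_of_trivial]
    · intro x hx
      have hval : star x ⬝ᵥ B *ᵥ x = star (R *ᵥ x) ⬝ᵥ M *ᵥ (R *ᵥ x) := by
        simp only [star_trivial, hB, ← mulVec_mulVec, dotProduct_mulVec (R := ℝ), vecMul_transpose]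
      have h0 : 0 ≤ star x ⬝ᵥ B *ᵥ x := hval ▸ hM.dotProduct_mulVec_nonneg (R *ᵥ x)
      rcases h0.lt_or_eq with hlt | heq
      · exact hlt
      · exfalso
        have hMRx : M *ᵥ (R *ᵥ x) = 0 :=
          (hM.dotProduct_mulVec_zero_iff (R *ᵥ x)).mp (by rw [← hval, ← heq])
        have h1 : (L * M * R) *ᵥ x = x := by rw [hLMR, one_mulVec]
        rw [Matrix.mul_assoc, ← mulVec_mulVec, ← mulVec_mulVec, hMRx, mulVec_zero] at h1
        exact hx h1.symm
  have hdet : IsUnit B.det := B.isUnit_iff_isUnit_det.mp hBpd.isUnit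
  have hBinv : B⁻¹ * B = 1 := Matrix.nonsing_inv_mul B hdet
  have hBinvT : B⁻¹ᵀ = B⁻¹ := by rw [Matrix.transpose_nonsing_inv, hBsymm]
  have e2 : Rᵀ * M * Lᵀ = 1 := by
    have := congrArg Matrix.transpose hLMR
    rwa [transpose_mul, transpose_mul, hMsymm, transpose_one, ← Matrix.mul_assoc] at this
  set C := L - B⁻¹ * Rᵀ with hC
  have hCid : C * M * Cᵀ = L * M * Lᵀ - B⁻¹ := by
    have hCt : Cᵀ = Lᵀ - R * B⁻¹ := by
      rw [hC, transpose_sub, transpose_mul, transpose_transpose, hBinvT]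
    rw [hCt, hC]
    have expand : (L - B⁻¹ * Rᵀ) * M * (Lᵀ - R * B⁻¹)
        = L * M * Lᵀ - (L * M * R) * B⁻¹ - B⁻¹ * (Rᵀ * M * Lᵀ)
          + B⁻¹ * B * B⁻¹ := by
      rw [hB]
      simp only [Matrix.sub_mul, Matrix.mul_sub, Matrix.mul_assoc]
      abel
    rw [expand, hLMR, e2, hBinv, Matrix.one_mul, Matrix.mul_one]
    abel
  refine ⟨hBpd, ?_⟩
  rw [← hCid]
  have := hM.mul_mul_conjTranspose_same C
  rwa [conjTranspose_eq_transpose_of_trivial] at this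

omit [DecidableEq m] in
lemma aux_psd_smul {A : Matrix m m ℝ} (hA : A.PosSemidef)
    {c : ℝ} (hc : 0 ≤ c) : (c • A).PosSemidef := by
  rw [posSemidef_iff_dotProduct_mulVec]
  refine ⟨?_, fun x => ?_⟩
  · unfold Matrix.IsHermitian
    rw [conjTranspose_smul, hA.1]
    simp
  · rw [smul_mulVec, dotProduct_smul, smul_eq_mul]
    exact mul_nonneg hc (by simpa using hA.dotProduct_mulVec_nonneg x)

omit [DecidableEq m] in
lemma aux_psd_sum {κ : Type*} (t : Finset κ) (A : κ → Matrix m m ℝ)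
    (hs : ∀ i ∈ t, (A i).PosSemidef) : (∑ i ∈ t, A i).PosSemidef := by
  induction t using Finset.cons_induction with
  | empty => simpa using Matrix.PosSemidef.zero
  | cons a t ha ih =>
    rw [Finset.sum_cons]
    exact ((hs a (Finset.mem_cons_self a t)).add
      (ih fun i hi => hs i (Finset.mem_cons_of_mem hi)))

omit [DecidableEq m] in
lemma aux_psd_vecMulVec (f : m → ℝ) : (vecMulVec f f).PosSemidef := by
  have : vecMulVec f f = (Matrix.replicateCol Unit f) * (Matrix.replicateCol Unit f)ᴴ := by
    ext x y
    simp [vecMulVec_apply, Matrix.mul_apply, Matrix.replicateCol]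
  rw [this]
  exact Matrix.posSemidef_self_mul_conjTranspose _

lemma KGK_eq (M G : Matrix m m ℝ) (K R : Matrix m s ℝ) (hMsym : Mᵀ = M)
    (hMR : M * R = K) (hG : M * G * M = M) : Kᵀ * G * K = Rᵀ * M * R := by
  rw [← hMR, transpose_mul, hMsym]
  calc Rᵀ * M * G * (M * R) = Rᵀ * (M * G * M) * R := by simp only [Matrix.mul_assoc]
    _ = Rᵀ * M * R := by rw [hG, Matrix.mul_assoc]

end Aux


/-- An approximate design on `v` treatments and `n` nuisance conditions:
nonnegative weights summing to one. -/
def IsDesign {v n : ℕ} (ξ : Fin v → Fin n → ℝ) : Prop :=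
  (∀ u t, 0 ≤ ξ u t) ∧ ∑ u, ∑ t, ξ u t = 1

/-- The treatment proportions design of `ξ`: `(w_ξ)_u = ∑_t ξ(u,t)`. -/
def tpd {v n : ℕ} (ξ : Fin v → Fin n → ℝ) : Fin v → ℝ :=
  fun u => ∑ t, ξ u t

/-- The regression vector `f(u,t) = (e_uᵀ, h(t)ᵀ)ᵀ`. -/
def regvec {v n : ℕ} {ι : Type*} (h : Fin n → ι → ℝ) (u : Fin v) (t : Fin n) :
    Fin v ⊕ ι → ℝ :=
  Sum.elim (fun i => if i = u then 1 else 0) (h t)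

/-- The moment matrix `M(ξ) = ∑_{u,t} ξ(u,t) f(u,t) f(u,t)ᵀ`. -/
def momM {v n : ℕ} {ι : Type*} [Fintype ι] (h : Fin n → ι → ℝ)
    (ξ : Fin v → Fin n → ℝ) : Matrix (Fin v ⊕ ι) (Fin v ⊕ ι) ℝ :=
  ∑ u, ∑ t, ξ u t • vecMulVec (regvec h u t) (regvec h u t)

/-- The matrix `K = (Qᵀ, 0)ᵀ`. -/
def Kmat {v s : ℕ} (ι : Type*) (Q : Matrix (Fin v) (Fin s) ℝ) :
    Matrix (Fin v ⊕ ι) (Fin s) ℝ :=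
  Matrix.of fun i j => Sum.elim (fun a => Q a j) (fun _ => 0) i

/-- Feasibility of a design: the column space of `K` is contained in the
column space of `M(ξ)`. -/
def Feasible {v n s : ℕ} {ι : Type*} [Fintype ι] (h : Fin n → ι → ℝ)
    (Q : Matrix (Fin v) (Fin s) ℝ) (ξ : Fin v → Fin n → ℝ) : Prop :=
  LinearMap.range (Kmat ι Q).mulVecLin ≤ LinearMap.range (momM h ξ).mulVecLin

/-- `G` is a generalized inverse of `M`. -/
def IsGInv {ι : Type*} [Fintype ι] (M G : Matrix ι ι ℝ) : Prop :=
  M * G * M = M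

/-- Information matrix `N_Q(w) = (Qᵀ diag(w)⁻¹ Q)⁻¹` of a treatment
proportions design in the marginal model. -/
def NQ {v s : ℕ} (Q : Matrix (Fin v) (Fin s) ℝ) (w : Fin v → ℝ) :
    Matrix (Fin s) (Fin s) ℝ :=
  (Qᵀ * diagonal (fun u => (w u)⁻¹) * Q)⁻¹

/-- The matrix `H_ξ` whose `u`-th column is `(1/w_u) ∑_t ξ(u,t) h(t)`. -/
def Hmat {v n : ℕ} {ι : Type*} (h : Fin n → ι → ℝ) (ξ : Fin v → Fin n → ℝ) :
    Matrix ι (Fin v) ℝ :=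
  Matrix.of fun i u => (tpd ξ u)⁻¹ * ∑ t, ξ u t * h t i

/-- `ξ` is resistant to nuisance effects for the contrasts `Q`. -/
def NuisanceResistant {v n s : ℕ} {ι : Type*} (h : Fin n → ι → ℝ)
    (Q : Matrix (Fin v) (Fin s) ℝ) (ξ : Fin v → Fin n → ℝ) : Prop :=
  Hmat h ξ * Q = 0

/-- `ξ` is balanced: all columns of `H_ξ` coincide. -/
def BalancedDesign {v n : ℕ} {ι : Type*} (h : Fin n → ι → ℝ)
    (ξ : Fin v → Fin n → ℝ) : Prop :=
  ∀ u u' : Fin v, (fun i => Hmat h ξ i u) = (fun i => Hmat h ξ i u')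

section MomM
variable {v n : ℕ} {ι : Type*} [Fintype ι] (h : Fin n → ι → ℝ) (ξ : Fin v → Fin n → ℝ)

lemma momM_apply (x y : Fin v ⊕ ι) :
    momM h ξ x y = ∑ u, ∑ t, ξ u t * (regvec h u t x * regvec h u t y) := by
  simp [momM, Matrix.sum_apply, vecMulVec_apply, mul_assoc]

lemma momM_symm : (momM h ξ)ᵀ = momM h ξ := by
  ext x y
  simp only [transpose_apply, momM_apply]
  congr 1; funext u; congr 1; funext t; ring

lemma momM_psd (hξ : ∀ u t, 0 ≤ ξ u t) : (momM h ξ).PosSemidef := by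
  unfold momM
  apply aux_psd_sum
  intro u _
  apply aux_psd_sum
  intro t _
  exact aux_psd_smul (aux_psd_vecMulVec _) (hξ u t)

lemma momM_inl_inl (a b : Fin v) :
    momM h ξ (Sum.inl a) (Sum.inl b) = if a = b then tpd ξ a else 0 := by
  rw [momM_apply]
  rcases eq_or_ne a b with rfl | hab
  · simp [regvec, tpd, Finset.sum_ite_eq']
  · rw [if_neg hab]
    apply Finset.sum_eq_zero
    intro u _
    apply Finset.sum_eq_zero
    intro t _
    simp only [regvec, Sum.elim_inl]
    rcases eq_or_ne a u with rfl | hau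
    · rw [if_neg (fun hb : b = a => hab hb.symm)]
      ring
    · rw [if_neg hau]
      ring

lemma momM_inr_inl (i : ι) (a : Fin v) :
    momM h ξ (Sum.inr i) (Sum.inl a) = ∑ t, ξ a t * h t i := by
  rw [momM_apply]
  simp only [regvec, Sum.elim_inr, Sum.elim_inl]
  rw [Finset.sum_comm]
  apply Finset.sum_congr rfl
  intro t _
  simp [mul_ite, Finset.sum_ite_eq]

lemma momM_inl_inr (i : ι) (a : Fin v) :
    momM h ξ (Sum.inl a) (Sum.inr i) = ∑ t, ξ a t * h t i := by
  have := congrFun (congrFun (momM_symm h ξ) (Sum.inl a)) (Sum.inr i)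
  rw [transpose_apply] at this
  rw [← this, momM_inr_inl]

end MomM

lemma rank_injective {v s : ℕ} (Q : Matrix (Fin v) (Fin s) ℝ) (hQrank : Q.rank = s) :
    Function.Injective Q.mulVecLin := by
  rw [← LinearMap.ker_eq_bot]
  have h1 := Q.mulVecLin.finrank_range_add_finrank_ker
  rw [show Module.finrank ℝ (Fin s → ℝ) = s by simp, ← Matrix.rank, hQrank] at h1
  have : Module.finrank ℝ (LinearMap.ker Q.mulVecLin) = 0 := by omega
  exact Submodule.finrank_eq_zero.mp this

lemma X_posdef {v s : ℕ} (Q : Matrix (Fin v) (Fin s) ℝ) (hQrank : Q.rank = s)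
    (w : Fin v → ℝ) (hw : ∀ u, 0 < w u) :
    (Qᵀ * diagonal (fun u => (w u)⁻¹) * Q).PosDef := by
  have hQinj : Function.Injective Q.mulVecLin := rank_injective Q hQrank
  rw [posDef_iff_dotProduct_mulVec]
  constructor
  · rw [IsHermitian, conjTranspose_eq_transpose_of_trivial, transpose_mul, transpose_mul,
      transpose_transpose, diagonal_transpose, Matrix.mul_assoc]
  · intro x hx
    have hQx : Q *ᵥ x ≠ 0 := by
      intro h0
      exact hx (hQinj (by simpa [Matrix.mulVecLin_apply] using h0))
    have hval : star x ⬝ᵥ (Qᵀ * diagonal (fun u => (w u)⁻¹) * Q) *ᵥ x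
        = ∑ a, (Q *ᵥ x) a * ((w a)⁻¹ * (Q *ᵥ x) a) := by
      rw [Matrix.mul_assoc, ← mulVec_mulVec, star_trivial,
        dotProduct_mulVec (R := ℝ), vecMul_transpose, ← mulVec_mulVec]
      simp [dotProduct, mulVec_diagonal]
    rw [hval]
    obtain ⟨a0, ha0⟩ := Function.ne_iff.mp hQx
    apply Finset.sum_pos'
    · intro a _
      have h1 : 0 ≤ (w a)⁻¹ := inv_nonneg.mpr (hw a).le
      nlinarith [mul_self_nonneg ((Q *ᵥ x) a)]
    · refine ⟨a0, Finset.mem_univ a0, ?_⟩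
      have h1 : 0 < (w a0)⁻¹ := inv_pos.mpr (hw a0)
      nlinarith [mul_self_pos.mpr ha0]

/-- If ξ* is Φ-optimal in the model with nuisance effects
(Φ Loewner-isotone), then its treatment proportions design w* has all
weights positive and is Φ-optimal in the marginal model without nuisance
effects. -/
theorem stmt7 {v n d s : ℕ} (hv : 2 ≤ v)
    (h : Fin n → Fin d → ℝ) (Q : Matrix (Fin v) (Fin s) ℝ)
    (hQc : ∀ j, ∑ i, Q i j = 0) (hQrow : ∀ i, ∃ j, Q i j ≠ 0)
    (hQrank : Q.rank = s)
    (Φ : Matrix (Fin s) (Fin s) ℝ → ℝ)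
    (hiso : ∀ A B : Matrix (Fin s) (Fin s) ℝ,
      A.PosSemidef → B.PosSemidef → (B - A).PosSemidef → Φ A ≤ Φ B)
    (ξs : Fin v → Fin n → ℝ) (hξs : IsDesign ξs) (hfeas : Feasible h Q ξs)
    (hopt : ∀ ξ, IsDesign ξ → Feasible h Q ξ →
      ∀ Gs, IsGInv (momM h ξs) Gs → ∀ G, IsGInv (momM h ξ) G →
        Φ (((Kmat (Fin d) Q)ᵀ * G * Kmat (Fin d) Q)⁻¹) ≤
          Φ (((Kmat (Fin d) Q)ᵀ * Gs * Kmat (Fin d) Q)⁻¹)) :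
    (∀ u, 0 < tpd ξs u) ∧
    (∀ w : Fin v → ℝ, (∀ u, 0 < w u) → ∑ u, w u = 1 →
      Φ (NQ Q w) ≤ Φ (NQ Q (tpd ξs))) := by
  classical
  obtain ⟨hξnn, hξsum⟩ := hξs
  have hn : (n : ℝ) ≠ 0 := by
    rcases Nat.eq_zero_or_pos n with rfl | hn
    · simp at hξsum
    · exact_mod_cast hn.ne'
  -- Part 1: positivity of the treatment proportions
  have hpos : ∀ u, 0 < tpd ξs u := by
    intro u0
    rcases (Finset.sum_nonneg fun t _ => hξnn u0 t : (0:ℝ) ≤ tpd ξs u0).lt_or_eq with hlt | heq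
    · exact hlt
    · exfalso
      have hz : ∀ t, ξs u0 t = 0 := fun t =>
        (Finset.sum_eq_zero_iff_of_nonneg (fun t _ => hξnn u0 t)).mp heq.symm t (Finset.mem_univ t)
      obtain ⟨j, hj⟩ := hQrow u0
      obtain ⟨y, hy⟩ := hfeas ⟨Pi.single j 1, rfl⟩
      have hrow : ∀ x, momM h ξs (Sum.inl u0) x = 0 := by
        rintro (b | i)
        · rw [momM_inl_inl]
          split_ifs with hb
          · exact heq.symm
          · rfl
        · rw [momM_inl_inr]
          exact Finset.sum_eq_zero fun t _ => by rw [hz t, zero_mul]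
      have h1 : (momM h ξs).mulVecLin y (Sum.inl u0) = 0 := by
        simp [Matrix.mulVecLin_apply, Matrix.mulVec, dotProduct, hrow]
      rw [hy] at h1
      apply hj
      simpa [Matrix.mulVecLin_apply, Kmat, Matrix.mulVec, dotProduct, Pi.single_apply] using h1
  refine ⟨hpos, ?_⟩
  intro w hw hwsum
  set K := Kmat (Fin d) Q with hK
  set Ms := momM h ξs with hMs
  have hMs_psd : Ms.PosSemidef := momM_psd h ξs hξnn
  have hMs_symm : Msᵀ = Ms := momM_symm h ξs
  -- Rs : a matrix with Ms * Rs = K (from feasibility)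
  have hcol : ∀ j : Fin s, ∃ r, Ms.mulVecLin r = K.mulVecLin (Pi.single j 1) :=
    fun j => hfeas ⟨Pi.single j 1, rfl⟩
  choose r hr using hcol
  set Rs : Matrix (Fin v ⊕ Fin d) (Fin s) ℝ := Matrix.of (fun x j => r j x) with hRs
  have hMRs : Ms * Rs = K := by
    ext x j
    rw [Matrix.mul_apply]
    have h1 := congrFun (hr j) x
    simp only [Matrix.mulVecLin_apply, Matrix.mulVec, dotProduct] at h1
    have h2 : ∑ y, Ms x y * Rs y j = ∑ y, K x y * (Pi.single j 1 : Fin s → ℝ) y := h1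
    rw [h2]
    simp [Pi.single_apply, mul_ite, Finset.sum_ite_eq']
  -- the marginal information matrix of w* := tpd ξs
  set ws := tpd ξs with hws
  set Dinv : Matrix (Fin v) (Fin v) ℝ := diagonal (fun u => (ws u)⁻¹) with hDinv
  set X := Qᵀ * Dinv * Q with hX
  have hXpd : X.PosDef := X_posdef Q hQrank ws hpos
  have hXdet : IsUnit X.det := X.isUnit_iff_isUnit_det.mp hXpd.isUnit
  have hXsymm : Xᵀ = X := by
    rw [hX, transpose_mul, transpose_mul, transpose_transpose, hDinv, diagonal_transpose,
      Matrix.mul_assoc]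
  have hXinvT : X⁻¹ᵀ = X⁻¹ := by rw [Matrix.transpose_nonsing_inv, hXsymm]
  -- P : the projection onto the treatment coordinates
  set P : Matrix (Fin v) (Fin v ⊕ Fin d) ℝ :=
    Matrix.of (fun a x => if x = Sum.inl a then 1 else 0) with hP
  have hPmul : ∀ {α : Type} [Fintype α] (N : Matrix (Fin v ⊕ Fin d) α ℝ) (a : Fin v) (y : α),
      (P * N) a y = N (Sum.inl a) y := by
    intro α _ N a y
    rw [Matrix.mul_apply, Fintype.sum_sum_type]
    simp [hP, Sum.inl.injEq, ite_mul, Finset.sum_ite_eq']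
  have hPK : P * K = Q := by
    ext a j
    rw [hPmul]
    simp [hK, Kmat]
  have hPMP : P * Ms * Pᵀ = diagonal ws := by
    ext a b
    rw [Matrix.mul_apply]
    simp only [hPmul]
    rw [Fintype.sum_sum_type]
    simp only [transpose_apply, hP, Matrix.of_apply, Sum.inl.injEq, mul_ite, mul_one, mul_zero]
    simp only [reduceCtorEq, if_false, Finset.sum_const_zero, add_zero, Finset.sum_ite_eq']
    rw [hMs, momM_inl_inl]
    simp [Matrix.diagonal_apply, hws]
  set A := X⁻¹ * Qᵀ * Dinv with hA
  set L := A * P with hL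
  have hAQ : A * Q = 1 := by
    have h1 : A * Q = X⁻¹ * X := by
      rw [hA, hX]; simp only [Matrix.mul_assoc]
    rw [h1, Matrix.nonsing_inv_mul X hXdet]
  have hLK : L * K = 1 := by rw [hL, Matrix.mul_assoc, hPK, hAQ]
  have hLMR : L * Ms * Rs = 1 := by rw [Matrix.mul_assoc, hMRs, hLK]
  obtain ⟨hBpd, hdiff⟩ := sandwich Ms hMs_psd Rs L hLMR
  have hDD : diagonal ws * Dinv = 1 := by
    rw [hDinv, diagonal_mul_diagonal]
    rw [show (fun u => ws u * (ws u)⁻¹) = fun _ => (1:ℝ) from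
      funext fun u => mul_inv_cancel₀ (hpos u).ne', diagonal_one]
  have hLML : L * Ms * Lᵀ = X⁻¹ := by
    have h1 : L * Ms * Lᵀ = A * (P * Ms * Pᵀ) * Aᵀ := by
      rw [hL, transpose_mul]
      simp only [Matrix.mul_assoc]
    rw [h1, hPMP]
    have hAT : Aᵀ = Dinv * (Q * X⁻¹) := by
      rw [hA, transpose_mul, transpose_mul, transpose_transpose, hDinv, diagonal_transpose,
        hXinvT, ← hDinv]
    rw [hAT, hA]
    simp only [Matrix.mul_assoc]
    rw [show diagonal ws * (Dinv * (Q * X⁻¹)) = Q * X⁻¹ by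
      rw [← Matrix.mul_assoc, hDD, Matrix.one_mul]]
    rw [show Qᵀ * (Dinv * (Q * X⁻¹)) = X * X⁻¹ by
      rw [hX]; simp only [Matrix.mul_assoc]]
    rw [Matrix.mul_nonsing_inv X hXdet, Matrix.mul_one]
  obtain ⟨Gs, hGs⟩ := exists_ginv Ms hMs_psd.1
  have hKGsK : Kᵀ * Gs * K = Rsᵀ * Ms * Rs := KGK_eq Ms Gs K Rs hMs_symm hMRs hGs
  -- the competing design ξw
  set ξw : Fin v → Fin n → ℝ := fun u _ => w u / n with hξw
  have htpdw : ∀ u, tpd ξw u = w u := by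
    intro u
    simp only [tpd, hξw, Finset.sum_const, Finset.card_univ, Fintype.card_fin, nsmul_eq_mul]
    rw [mul_comm, div_mul_cancel₀ _ hn]
  have hdesw : IsDesign ξw := by
    constructor
    · intro u t
      exact div_nonneg (hw u).le (Nat.cast_nonneg n)
    · calc ∑ u, ∑ t, ξw u t = ∑ u, tpd ξw u := rfl
        _ = ∑ u, w u := by simp only [htpdw]
        _ = 1 := hwsum
  set Mw := momM h ξw with hMw
  have hMw_inl_inl : ∀ a b, Mw (Sum.inl a) (Sum.inl b) = if a = b then w a else 0 := by
    intro a b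
    rw [hMw, momM_inl_inl, htpdw]
  have hMw_inr_inl : ∀ (i : Fin d) a, Mw (Sum.inr i) (Sum.inl a)
      = ((∑ t, h t i) / n) * w a := by
    intro i a
    rw [hMw, momM_inr_inl]
    simp only [hξw]
    rw [← Finset.mul_sum]
    ring
  set Rw : Matrix (Fin v ⊕ Fin d) (Fin s) ℝ :=
    Matrix.of (fun x j => Sum.elim (fun a => (w a)⁻¹ * Q a j) (fun _ => 0) x) with hRw
  have hMRw : Mw * Rw = K := by
    ext x j
    rw [Matrix.mul_apply, Fintype.sum_sum_type]
    have h2 : ∑ i : Fin d, Mw x (Sum.inr i) * Rw (Sum.inr i) j = 0 :=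
      Finset.sum_eq_zero fun i _ => by simp [hRw]
    rw [h2, add_zero]
    cases x with
    | inl a =>
      have h3 : ∀ b, Mw (Sum.inl a) (Sum.inl b) * Rw (Sum.inl b) j
          = if a = b then w a * ((w a)⁻¹ * Q a j) else 0 := by
        intro b
        rw [hMw_inl_inl]
        split_ifs with hab
        · subst hab; simp [hRw]
        · simp
      rw [Finset.sum_congr rfl fun b _ => h3 b, Finset.sum_ite_eq]
      simp only [Finset.mem_univ, if_true, hK, Kmat, Matrix.of_apply, Sum.elim_inl]
      rw [show w a * ((w a)⁻¹ * Q a j) = Q a j * (w a * (w a)⁻¹) by ring,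
        mul_inv_cancel₀ (hw a).ne', mul_one]
    | inr i =>
      have h3 : ∀ b, Mw (Sum.inr i) (Sum.inl b) * Rw (Sum.inl b) j
          = ((∑ t, h t i) / n) * Q b j := by
        intro b
        rw [hMw_inr_inl, hRw]
        simp only [Matrix.of_apply, Sum.elim_inl]
        rw [show (∑ t, h t i) / (n:ℝ) * w b * ((w b)⁻¹ * Q b j)
            = (∑ t, h t i) / n * Q b j * (w b * (w b)⁻¹) by ring,
          mul_inv_cancel₀ (hw b).ne', mul_one]
      rw [Finset.sum_congr rfl fun b _ => h3 b, ← Finset.mul_sum, hQc j, mul_zero]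
      simp [hK, Kmat]
  have hfeasw : Feasible h Q ξw := by
    rintro y ⟨x, rfl⟩
    refine ⟨Rw *ᵥ x, ?_⟩
    simp only [Matrix.mulVecLin_apply, Matrix.mulVec_mulVec, hMRw]
    exact congrArg (· *ᵥ x) hMRw
  obtain ⟨G, hG⟩ := exists_ginv Mw (momM_psd h ξw hdesw.1).1
  have hKGK : Kᵀ * G * K = Qᵀ * diagonal (fun u => (w u)⁻¹) * Q := by
    rw [KGK_eq Mw G K Rw (momM_symm h ξw) hMRw hG, Matrix.mul_assoc, hMRw]
    ext j j'
    rw [Matrix.mul_apply, Fintype.sum_sum_type, Matrix.mul_apply]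
    have h4 : ∑ i : Fin d, Rwᵀ j (Sum.inr i) * K (Sum.inr i) j' = 0 :=
      Finset.sum_eq_zero fun i _ => by simp [hRw]
    rw [h4, add_zero]
    apply Finset.sum_congr rfl
    intro b _
    simp only [transpose_apply, hRw, Matrix.of_apply, Sum.elim_inl, hK, Kmat,
      Matrix.mul_diagonal]
    ring
  have hopt1 := hopt ξw hdesw hfeasw Gs hGs G hG
  rw [hKGK, hKGsK] at hopt1
  have hNQs : NQ Q (tpd ξs) = X⁻¹ := rfl
  have hNQw : NQ Q w = (Qᵀ * diagonal (fun u => (w u)⁻¹) * Q)⁻¹ := rfl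
  rw [hNQw, hNQs]
  refine le_trans hopt1 ?_
  apply hiso
  · exact hBpd.inv.posSemidef
  · exact hXpd.inv.posSemidef
  · rw [hLML] at hdiff
    exact hdiff

end
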